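/- Let A = ⊕_{g∈Γ} A_g be a Γ-graded unital ℂ-algebra, ω a normalized U(1)-valued 2-cocycle on Γ, and τ : A → ℂ a linear functional such that τ vanishes on A_g for every g ≠ e and τ(xy) = τ(yx) for all x, y ∈ A. Then τ is also a trace for the twisted product: τ(x *_ω y) = τ(y *_ω x) for all x, y ∈ A. -/

import Mathlib

/-- let `A = ⊕_{g∈Γ} A_g` be a Γ-graded unital ℂ-algebra, `ω` a normalized
U(1)-valued 2-cocycle on `Γ`, and `τ : A → ℂ` a linear functional vanishing on `A_g` for
`g ≠ e` and tracial for the original product.  Then `τ` is tracial for the twisted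
product: `τ(x *_ω y) = τ(y *_ω x)` for all `x, y ∈ A`, where `μ` is the bilinear
extension of `x *_ω y = ω(g,h)·xy`. -/
theorem stmt_6 (Γ : Type) [Group Γ] [DecidableEq Γ]
    (A : Type) [Ring A] [Algebra ℂ A]
    (𝒜 : Γ → Submodule ℂ A)
    (hinternal : DirectSum.IsInternal 𝒜)
    (hone : (1 : A) ∈ 𝒜 (1 : Γ))
    (hmul : ∀ (g h : Γ) (x y : A), x ∈ 𝒜 g → y ∈ 𝒜 h → x * y ∈ 𝒜 (g * h))
    (ω : Γ → Γ → ℂ)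
    (habs : ∀ g h : Γ, ‖ω g h‖ = 1)
    (hcoc : ∀ g h k : Γ, ω g h * ω (g * h) k = ω g (h * k) * ω h k)
    (hnorm₁ : ∀ g : Γ, ω g 1 = 1) (hnorm₂ : ∀ g : Γ, ω 1 g = 1)
    (hnorm₃ : ∀ g : Γ, ω g g⁻¹ = 1)
    (μ : A →ₗ[ℂ] A →ₗ[ℂ] A)
    (hμ : ∀ (g h : Γ) (x y : A), x ∈ 𝒜 g → y ∈ 𝒜 h → μ x y = ω g h • (x * y))
    (τ : A →ₗ[ℂ] ℂ)
    (hτgrade : ∀ (g : Γ), g ≠ 1 → ∀ x ∈ 𝒜 g, τ x = 0)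
    (hτtrace : ∀ x y : A, τ (x * y) = τ (y * x)) :
    ∀ x y : A, τ (μ x y) = τ (μ y x) := by

  -- homogeneous case first
  have key : ∀ (g h : Γ) (x y : A), x ∈ 𝒜 g → y ∈ 𝒜 h →
      τ (μ x y) = τ (μ y x) := by
    intro g h x y hx hy
    rw [hμ g h x y hx hy, hμ h g y x hy hx, map_smul, map_smul,
      hτtrace y x]
    by_cases hgh : g * h = 1
    · have hh : h = g⁻¹ := eq_inv_of_mul_eq_one_right hgh
      subst hh
      have hinv : ω g⁻¹ g = 1 := by
        have := hcoc g g⁻¹ g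
        simpa [hnorm₁, hnorm₂, hnorm₃] using this.symm
      rw [hnorm₃, hinv]
    · have h1 : τ (x * y) = 0 := hτgrade _ hgh _ (hmul g h x y hx hy)
      rw [h1, smul_zero, smul_zero]
  intro x y
  have htop : (⨆ g, 𝒜 g) = ⊤ := hinternal.submodule_iSup_eq_top
  have hx : x ∈ (⨆ g, 𝒜 g) := htop ▸ Submodule.mem_top
  have hy : y ∈ (⨆ g, 𝒜 g) := htop ▸ Submodule.mem_top
  induction hx using Submodule.iSup_induction' with
  | mem g x hx =>
    induction hy using Submodule.iSup_induction' with
    | mem h y hy => exact key g h x y hx hy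
    | zero => simp
    | add y z _ _ hy hz => simp only [map_add, LinearMap.add_apply, hy, hz]
  | zero => simp
  | add x z _ _ hx hz => simp only [map_add, LinearMap.add_apply, hx, hz]
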